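/- Let σ be a partition of the primes and suppose G = D ⋊ M is a finite σ-soluble group in which σ-permutability is transitive (a P σT-group), where D = G^{𝔑_σ} is the σ-nilpotent residual of G. If A is a σ-primary σ-subnormal subgroup of G with A ≤ M, then D ≤ C_G(A). -/

import Mathlib

open Subgroup
open scoped Pointwise

section Defs

variable {ι : Type*}

/-- `σ` is a partition of the set of all primes. -/
structure IsPrimePartition (σ : ι → Set ℕ) : Prop where
  prime_of_mem : ∀ i p, p ∈ σ i → p.Prime
  existsUnique_mem : ∀ p : ℕ, p.Prime → ∃! i, p ∈ σ i

/-- every prime dividing `n` lies in the block `σ i`. -/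
def IsSigmaNumber (σ : ι → Set ℕ) (i : ι) (n : ℕ) : Prop :=
  ∀ p : ℕ, p.Prime → p ∣ n → p ∈ σ i

/-- `G` is a `σ i`-group. -/
def IsSigmaIGroup (σ : ι → Set ℕ) (i : ι) (G : Type*) [Group G] : Prop :=
  IsSigmaNumber σ i (Nat.card G)

/-- `G` is σ-primary: it is a `σ i`-group for some `i`. -/
def IsSigmaPrimary (σ : ι → Set ℕ) (G : Type*) [Group G] : Prop :=
  ∃ i, IsSigmaIGroup σ i G

/-- `G` is σ-nilpotent: `G` is the internal direct product of normal
σ-primary subgroups (one `σ i`-subgroup for each block). -/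
def IsSigmaNilpotent (σ : ι → Set ℕ) (G : Type*) [Group G] : Prop :=
  ∃ H : ι → Subgroup G, (∀ i, (H i).Normal) ∧ (∀ i, IsSigmaIGroup σ i ↥(H i)) ∧
    iSupIndep H ∧ iSup H = ⊤

/-- One step in a σ-subnormal chain: `A ≤ B` and either `A` is normal in `B` or
`B/(A_B)` (quotient by the normal core of `A` in `B`) is σ-primary. -/
def SigmaSubnormalStep (σ : ι → Set ℕ) {G : Type*} [Group G] (A B : Subgroup G) : Prop :=
  A ≤ B ∧ (((A.subgroupOf B).Normal) ∨
    IsSigmaPrimary σ (↥B ⧸ (A.subgroupOf B).normalCore))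

/-- `A` is σ-subnormal in `G`. -/
def IsSigmaSubnormal (σ : ι → Set ℕ) {G : Type*} [Group G] (A : Subgroup G) : Prop :=
  ∃ n, ∃ C : Fin (n + 1) → Subgroup G, C 0 = A ∧ C (Fin.last n) = ⊤ ∧
    ∀ k : Fin n, SigmaSubnormalStep σ (C k.castSucc) (C k.succ)

/-- `A` is subnormal in `G`. -/
def IsSubnormalSub {G : Type*} [Group G] (A : Subgroup G) : Prop :=
  ∃ n, ∃ C : Fin (n + 1) → Subgroup G, C 0 = A ∧ C (Fin.last n) = ⊤ ∧
    ∀ k : Fin n, C k.castSucc ≤ C k.succ ∧ ((C k.castSucc).subgroupOf (C k.succ)).Normal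

/-- `M` is a modular subgroup of `G`: a modular element of the subgroup lattice. -/
def IsModularSubgroup {G : Type*} [Group G] (M : Subgroup G) : Prop :=
  (∀ X Z : Subgroup G, X ≤ Z → X ⊔ (M ⊓ Z) = (X ⊔ M) ⊓ Z) ∧
  (∀ Y Z : Subgroup G, M ≤ Z → M ⊔ (Y ⊓ Z) = (M ⊔ Y) ⊓ Z)

/-- `A` is submodular in `G`: there is a chain from `A` to `G` with each
term modular in the next. -/
def IsSubmodular {G : Type*} [Group G] (A : Subgroup G) : Prop :=
  ∃ n, ∃ C : Fin (n + 1) → Subgroup G, C 0 = A ∧ C (Fin.last n) = ⊤ ∧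
    ∀ k : Fin n, C k.castSucc ≤ C k.succ ∧
      IsModularSubgroup ((C k.castSucc).subgroupOf (C k.succ))

/-- `H` is a Hall `σ i`-subgroup of `G`. -/
def IsHallSigmaI (σ : ι → Set ℕ) (i : ι) {G : Type*} [Group G] (H : Subgroup G) : Prop :=
  IsSigmaNumber σ i (Nat.card H) ∧ ∀ p : ℕ, p.Prime → p ∣ H.index → p ∉ σ i

/-- `G` is σ-full: it has a Hall `σ i`-subgroup for every `σ i ∈ σ(G)`. -/
def IsSigmaFull (σ : ι → Set ℕ) (G : Type*) [Group G] : Prop :=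
  ∀ i, (∃ p : ℕ, p.Prime ∧ p ∈ σ i ∧ p ∣ Nat.card G) →
    ∃ H : Subgroup G, IsHallSigmaI σ i H

/-- Two subgroups permute. -/
def Permutes {G : Type*} [Group G] (A B : Subgroup G) : Prop :=
  (A : Set G) * (B : Set G) = (B : Set G) * (A : Set G)

/-- `A` is σ-permutable in `G`: it permutes with every Hall `σ i`-subgroup of `G`
(hence with all their conjugates). -/
def IsSigmaPermutable (σ : ι → Set ℕ) {G : Type*} [Group G] (A : Subgroup G) : Prop :=
  ∀ i, ∀ H : Subgroup G, IsHallSigmaI σ i H → Permutes A H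

/-- `A` is quasinormal (permutable) in `G`. -/
def IsQuasinormal {G : Type*} [Group G] (A : Subgroup G) : Prop :=
  ∀ B : Subgroup G, Permutes A B

/-- `A` is σ-quasinormal in `G`: modular and σ-subnormal. -/
def IsSigmaQuasinormal (σ : ι → Set ℕ) {G : Type*} [Group G] (A : Subgroup G) : Prop :=
  IsModularSubgroup A ∧ IsSigmaSubnormal σ A

/-- σ-permutability is a transitive relation on `G`. -/
def IsPSigmaTGroup (σ : ι → Set ℕ) (G : Type*) [Group G] : Prop :=
  ∀ K H : Subgroup G, H ≤ K → IsSigmaPermutable σ (H.subgroupOf K) →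
    IsSigmaPermutable σ K → IsSigmaPermutable σ H

/-- `H/K` is a chief factor of `G`. -/
def IsChiefFactor (G : Type*) [Group G] (K H : Subgroup G) : Prop :=
  K.Normal ∧ H.Normal ∧ K < H ∧
    ∀ N : Subgroup G, N.Normal → K ≤ N → N ≤ H → N = K ∨ N = H

/-- `G` is σ-soluble: every chief factor of `G` is σ-primary. -/
def IsSigmaSoluble (σ : ι → Set ℕ) (G : Type*) [Group G] : Prop :=
  ∀ K H : Subgroup G, ∀ hc : IsChiefFactor G K H,
    letI := hc.1; IsSigmaPrimary σ (↥H ⧸ K.subgroupOf H)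

/-- The σ-nilpotent residual `G^{𝔑_σ}` of `G`. -/
def sigmaNilpotentResidual (σ : ι → Set ℕ) (G : Type*) [Group G] : Subgroup G :=
  sInf {N : Subgroup G | ∃ h : N.Normal, letI := h; IsSigmaNilpotent σ (G ⧸ N)}

/-- The σ-soluble residual `G^{𝔖_σ}` of `G`. -/
def sigmaSolubleResidual (σ : ι → Set ℕ) (G : Type*) [Group G] : Subgroup G :=
  sInf {N : Subgroup G | ∃ h : N.Normal, letI := h; IsSigmaSoluble σ (G ⧸ N)}

/-- `G` is a σ-SC-group: every chief factor of `G` below `G^{𝔑_σ}` is simple. -/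
def IsSigmaSCGroup (σ : ι → Set ℕ) (G : Type*) [Group G] : Prop :=
  ∀ K H : Subgroup G, ∀ hc : IsChiefFactor G K H, H ≤ sigmaNilpotentResidual σ G →
    letI := hc.1; IsSimpleGroup (↥H ⧸ K.subgroupOf H)

/-- `G` is σ-supersoluble: every chief factor of `G` below `G^{𝔑_σ}` is cyclic. -/
def IsSigmaSupersoluble (σ : ι → Set ℕ) (G : Type*) [Group G] : Prop :=
  ∀ K H : Subgroup G, ∀ hc : IsChiefFactor G K H, H ≤ sigmaNilpotentResidual σ G →
    letI := hc.1; IsCyclic (↥H ⧸ K.subgroupOf H)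

/-- The σ-supersoluble residual `G^{𝔘_σ}` of `G`. -/
def sigmaSupersolubleResidual (σ : ι → Set ℕ) (G : Type*) [Group G] : Subgroup G :=
  sInf {N : Subgroup G | ∃ h : N.Normal, letI := h; IsSigmaSupersoluble σ (G ⧸ N)}

/-- The soluble radical `G_𝔖`: the largest soluble normal subgroup of `G`. -/
def solubleRadical (G : Type*) [Group G] : Subgroup G :=
  sSup {N : Subgroup G | N.Normal ∧ IsSolvable ↥N}

/-- `O_{σ i}(G)`: the largest normal `σ i`-subgroup of `G`. -/
def sigmaCore (σ : ι → Set ℕ) (i : ι) (G : Type*) [Group G] : Subgroup G :=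
  sSup {N : Subgroup G | N.Normal ∧ IsSigmaIGroup σ i ↥N}

/-- `O^{σ i}(G)`: the smallest normal subgroup of `G` with `σ i`-quotient. -/
def sigmaIResidual (σ : ι → Set ℕ) (i : ι) (G : Type*) [Group G] : Subgroup G :=
  sInf {N : Subgroup G | ∃ h : N.Normal, letI := h; IsSigmaIGroup σ i (G ⧸ N)}

end Defs



/-! ### Auxiliary lemmas -/

universe u

section AuxBasic

variable {ι : Type*} {σ : ι → Set ℕ}

lemma IsSigmaNumber.dvd' {i : ι} {m n : ℕ} (h : IsSigmaNumber σ i n) (hd : m ∣ n) :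
    IsSigmaNumber σ i m := fun p hp hpm => h p hp (hpm.trans hd)

lemma IsPrimePartition.block_eq (hσ : IsPrimePartition σ) {i j : ι} {p : ℕ} (hp : p.Prime)
    (hi : p ∈ σ i) (hj : p ∈ σ j) : i = j := by
  obtain ⟨k, -, hk⟩ := hσ.existsUnique_mem p hp
  rw [hk i hi, hk j hj]

variable {G : Type*} [Group G]

lemma nat_eq_one_of_no_prime {n : ℕ} (h : ∀ p : ℕ, p.Prime → ¬ p ∣ n) : n = 1 := by
  by_contra hne
  obtain ⟨p, hp, hpd⟩ := Nat.exists_prime_and_dvd hne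
  exact h p hp hpd

lemma coe_mul_coe_of_le {A H : Subgroup G} (h : H ≤ A) :
    (A : Set G) * (H : Set G) = (A : Set G) := by
  apply Set.Subset.antisymm
  · rintro x hx
    obtain ⟨a, ha, b, hb, rfl⟩ := hx
    exact A.mul_mem ha (h hb)
  · intro a ha
    exact ⟨a, ha, 1, H.one_mem, mul_one a⟩

lemma coe_mul_coe_of_le' {A H : Subgroup G} (h : H ≤ A) :
    (H : Set G) * (A : Set G) = (A : Set G) := by
  apply Set.Subset.antisymm
  · rintro x hx
    obtain ⟨a, ha, b, hb, rfl⟩ := hx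
    exact A.mul_mem (h ha) hb
  · intro a ha
    exact ⟨1, H.one_mem, a, ha, one_mul a⟩

lemma permutes_of_le {A H : Subgroup G} (h : H ≤ A) : Permutes A H := by
  rw [Permutes, coe_mul_coe_of_le h, coe_mul_coe_of_le' h]

lemma isSigmaPermutable_top : IsSigmaPermutable σ (⊤ : Subgroup G) := by
  intro i H _
  exact permutes_of_le le_top

lemma normal_permutes {A : Subgroup G} (hA : A.Normal) (H : Subgroup G) :
    Permutes A H := by
  haveI := hA
  rw [Permutes, ← Subgroup.normal_mul A H, ← Subgroup.mul_normal H A, sup_comm]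

lemma card_map_dvd {G' : Type*} [Group G'] (f : G →* G') (H : Subgroup G) :
    Nat.card (Subgroup.map f H) ∣ Nat.card H :=
  Subgroup.card_dvd_of_surjective (f.subgroupMap H) (f.subgroupMap_surjective H)

lemma card_subgroupOf {A B : Subgroup G} (h : A ≤ B) :
    Nat.card (A.subgroupOf B) = Nat.card A :=
  Nat.card_congr (Subgroup.subgroupOfEquivOfLe h).toEquiv

lemma card_quotient_dvd_of_map_le {G₁ G₂ : Type*} [Group G₁] [Group G₂] (f : G₁ →* G₂)
    (hf : Function.Surjective f) {N₁ : Subgroup G₁} {N₂ : Subgroup G₂} [N₁.Normal] [N₂.Normal]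
    (h : ∀ x ∈ N₁, f x ∈ N₂) : Nat.card (G₂ ⧸ N₂) ∣ Nat.card (G₁ ⧸ N₁) := by
  have hker : ∀ x ∈ N₁, ((QuotientGroup.mk' N₂).comp f) x = 1 := fun x hx => by
    simpa [QuotientGroup.eq_one_iff] using h x hx
  refine Subgroup.card_dvd_of_surjective
    (QuotientGroup.lift N₁ ((QuotientGroup.mk' N₂).comp f) hker) ?_
  intro y
  obtain ⟨z, rfl⟩ := QuotientGroup.mk'_surjective N₂ y
  obtain ⟨x, rfl⟩ := hf z
  exact ⟨QuotientGroup.mk x, rfl⟩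

lemma card_quotient_dvd_card_quotient_of_le {N M : Subgroup G} [hN : N.Normal] [hM : M.Normal]
    (h : N ≤ M) : Nat.card (G ⧸ M) ∣ Nat.card (G ⧸ N) :=
  card_quotient_dvd_of_map_le (MonoidHom.id G) Function.surjective_id (fun x hx => h hx)

end AuxBasic

section StepPerm

variable {ι : Type*} {σ : ι → Set ℕ} {G : Type*} [Group G]

lemma step_perm (hσ : IsPrimePartition σ) {A B : Subgroup G}
    (h : SigmaSubnormalStep σ A B) : IsSigmaPermutable σ (A.subgroupOf B) := by
  obtain ⟨hle, hcase⟩ := h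
  rcases hcase with hN | ⟨m₀, hm₀⟩
  · intro m H _
    exact normal_permutes hN H
  · intro m H hH
    set R := (A.subgroupOf B).normalCore with hRdef
    have hRA : R ≤ A.subgroupOf B := Subgroup.normalCore_le _
    have hRidx : R.index = Nat.card (↥B ⧸ R) := Subgroup.index_eq_card R
    by_cases hmm : m = m₀
    · subst hmm
      have hidx1 : (R ⊔ H).index = 1 := by
        apply nat_eq_one_of_no_prime
        intro p hp hpd
        have h1 : p ∣ H.index := hpd.trans (Subgroup.index_dvd_of_le le_sup_right)
        have h2 : p ∣ R.index := hpd.trans (Subgroup.index_dvd_of_le le_sup_left)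
        have h3 : p ∈ σ m := hm₀ p hp (hRidx ▸ h2)
        exact hH.2 p hp h1 h3
      have htop : R ⊔ H = ⊤ := Subgroup.index_eq_one.mp hidx1
      have e1 : (R : Set ↥B) * (H : Set ↥B) = Set.univ := by
        rw [← Subgroup.normal_mul R H, htop, Subgroup.coe_top]
      have e2 : (H : Set ↥B) * (R : Set ↥B) = Set.univ := by
        rw [← Subgroup.mul_normal H R, sup_comm, htop, Subgroup.coe_top]
      have hsub : (R : Set ↥B) ⊆ (A.subgroupOf B : Set ↥B) := hRA
      show (A.subgroupOf B : Set ↥B) * (H : Set ↥B) = (H : Set ↥B) * (A.subgroupOf B : Set ↥B)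
      apply Set.Subset.antisymm
      · exact Set.subset_univ _ |>.trans
          (by rw [← e2]; exact Set.mul_subset_mul Set.Subset.rfl hsub)
      · calc (H : Set ↥B) * (A.subgroupOf B : Set ↥B) ⊆ Set.univ := Set.subset_univ _
          _ = (R : Set ↥B) * (H : Set ↥B) := e1.symm
          _ ⊆ (A.subgroupOf B : Set ↥B) * (H : Set ↥B) :=
              Set.mul_subset_mul hsub Set.Subset.rfl
    · have hHle : H ≤ A.subgroupOf B := by
        set f := QuotientGroup.mk' R with hf
        have hd1 : Nat.card (Subgroup.map f H) ∣ Nat.card H := card_map_dvd (G := ↥B) f H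
        have hd2 : Nat.card (Subgroup.map f H) ∣ Nat.card (↥B ⧸ R) :=
          Subgroup.card_subgroup_dvd_card _
        have hc1 : Nat.card (Subgroup.map f H) = 1 := by
          apply nat_eq_one_of_no_prime
          intro p hp hpd
          have hpm : p ∈ σ m := hH.1 p hp (hpd.trans hd1)
          have hpm₀ : p ∈ σ m₀ := hm₀ p hp (hpd.trans hd2)
          exact hmm (hσ.block_eq hp hpm hpm₀)
        have hbot : Subgroup.map f H = ⊥ := Subgroup.card_eq_one.mp hc1
        intro x hx
        have hmem : f x ∈ Subgroup.map f H := Subgroup.mem_map.mpr ⟨x, hx, rfl⟩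
        rw [hbot, Subgroup.mem_bot] at hmem
        have hker : x ∈ f.ker := hmem
        rw [hf, QuotientGroup.ker_mk'] at hker
        exact hRA hker
      exact permutes_of_le hHle

lemma isSigmaSubnormal_isSigmaPermutable (hσ : IsPrimePartition σ) (hPT : IsPSigmaTGroup σ G)
    {A : Subgroup G} (hA : IsSigmaSubnormal σ A) : IsSigmaPermutable σ A := by
  obtain ⟨n, C, h0, hlast, hstep⟩ := hA
  have key : ∀ k, IsSigmaPermutable σ (C k) := by
    intro k
    induction k using Fin.reverseInduction with
    | last => rw [hlast]; exact isSigmaPermutable_top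
    | cast i ih =>
        exact hPT (C i.succ) (C i.castSucc) (hstep i).1 (step_perm hσ (hstep i)) ih
  rw [← h0]
  exact key 0

end StepPerm

section Chains2
variable {ι : Type*} {σ : ι → Set ℕ} {G : Type*} [Group G]

lemma quotient_sigmaSoluble (hsol : IsSigmaSoluble σ G) (N : Subgroup G) [hN : N.Normal] :
    IsSigmaSoluble σ (G ⧸ N) := by
  intro Kb Hb hc
  set f := QuotientGroup.mk' N with hfdef
  have hfs : Function.Surjective f := QuotientGroup.mk'_surjective N
  set K := Subgroup.comap f Kb with hKdef
  set H := Subgroup.comap f Hb with hHdef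
  haveI hKbn : Kb.Normal := hc.1
  haveI hHbn : Hb.Normal := hc.2.1
  haveI hKn : K.Normal := hKbn.comap f
  haveI hHn : H.Normal := hHbn.comap f
  have hmapK : Subgroup.map f K = Kb := Subgroup.map_comap_eq_self_of_surjective hfs _
  have hmapH : Subgroup.map f H = Hb := Subgroup.map_comap_eq_self_of_surjective hfs _
  have hkerK : f.ker ≤ K := fun x hx => by
    have : f x = 1 := hx
    simp [hKdef, Subgroup.mem_comap, this, Kb.one_mem]
  have hKH : K < H := by
    refine lt_of_le_of_ne (Subgroup.comap_mono (le_of_lt hc.2.2.1)) ?_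
    intro h
    exact (ne_of_lt hc.2.2.1) (by rw [← hmapK, ← hmapH, h])
  have hchief : IsChiefFactor G K H := by
    refine ⟨hKn, hHn, hKH, ?_⟩
    intro N' hN' hKN' hN'H
    have hm : (Subgroup.map f N').Normal := hN'.map f hfs
    rcases hc.2.2.2 (Subgroup.map f N') hm
      (by rw [← hmapK]; exact Subgroup.map_mono hKN')
      (by rw [← hmapH]; exact Subgroup.map_mono hN'H) with h | h
    · left
      rw [← Subgroup.comap_map_eq_self (hkerK.trans hKN'), h]
    · right
      rw [← Subgroup.comap_map_eq_self (hkerK.trans hKN'), h]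
  have hp := hsol K H hchief
  -- now transfer
  haveI : (K.subgroupOf H).Normal := Subgroup.normal_subgroupOf
  haveI : (Kb.subgroupOf Hb).Normal := Subgroup.normal_subgroupOf
  have hmem : ∀ x : ↥H, f (x : G) ∈ Hb := fun x => x.2
  set φ₀ : ↥H →* ↥Hb := MonoidHom.codRestrict (f.comp H.subtype) Hb hmem with hφ₀
  have hφ₀s : Function.Surjective φ₀ := by
    intro y
    obtain ⟨x, hx⟩ := hfs (y : G ⧸ N)
    have hxH : x ∈ H := by
      rw [hHdef, Subgroup.mem_comap, hx]
      exact y.2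
    exact ⟨⟨x, hxH⟩, Subtype.ext hx⟩
  have hmap2 : ∀ x ∈ K.subgroupOf H, φ₀ x ∈ Kb.subgroupOf Hb := by
    intro x hx
    rw [Subgroup.mem_subgroupOf] at hx ⊢
    have : (x : G) ∈ Subgroup.comap f Kb := hx
    rwa [Subgroup.mem_comap] at this
  have hdvd := card_quotient_dvd_of_map_le φ₀ hφ₀s hmap2
  obtain ⟨m, hm⟩ := hp
  exact ⟨m, hm.dvd' hdvd⟩


end Chains2

section Chains
variable {ι : Type*} {σ : ι → Set ℕ} {G : Type*} [Group G]

lemma step_inter {A B X : Subgroup G} (h : SigmaSubnormalStep σ A B) :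
    SigmaSubnormalStep σ (A ⊓ X) (B ⊓ X) := by
  obtain ⟨hle, hcase⟩ := h
  refine ⟨inf_le_inf_right X hle, ?_⟩
  rcases hcase with hN | ⟨m₀, hm₀⟩
  · left
    constructor
    intro a ha g
    rw [Subgroup.mem_subgroupOf] at ha ⊢
    have h1 : (⟨(g : G), g.2.1⟩ : ↥B) * ⟨(a : G), a.2.1⟩ * (⟨(g : G), g.2.1⟩ : ↥B)⁻¹ ∈
        A.subgroupOf B := hN.conj_mem ⟨(a : G), a.2.1⟩ (Subgroup.mem_subgroupOf.mpr ha.1) _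
    rw [Subgroup.mem_subgroupOf] at h1
    refine ⟨h1, ?_⟩
    exact X.mul_mem (X.mul_mem g.2.2 a.2.2) (X.inv_mem g.2.2)
  · right
    set R := (A.subgroupOf B).normalCore with hR
    set φ : ↥(B ⊓ X) →* ↥B ⧸ R :=
      (QuotientGroup.mk' R).comp (Subgroup.inclusion inf_le_left) with hφ
    have hker : φ.ker ≤ (A ⊓ X).subgroupOf (B ⊓ X) := by
      intro x hx
      rw [MonoidHom.mem_ker] at hx
      have h1 : (Subgroup.inclusion (inf_le_left : B ⊓ X ≤ B)) x ∈ R := by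
        rwa [hφ, MonoidHom.comp_apply, ← MonoidHom.mem_ker, QuotientGroup.ker_mk'] at hx
      have h2 : (x : G) ∈ A := (Subgroup.normalCore_le (A.subgroupOf B)) h1
      exact Subgroup.mem_subgroupOf.mpr ⟨h2, x.2.2⟩
    have hcore : φ.ker ≤ ((A ⊓ X).subgroupOf (B ⊓ X)).normalCore :=
      Subgroup.normal_le_normalCore.mpr hker
    have hd1 : Nat.card (↥(B ⊓ X) ⧸ ((A ⊓ X).subgroupOf (B ⊓ X)).normalCore) ∣
        Nat.card (↥(B ⊓ X) ⧸ φ.ker) := card_quotient_dvd_card_quotient_of_le hcore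
    have hd2 : Nat.card (↥(B ⊓ X) ⧸ φ.ker) = Nat.card φ.range :=
      Nat.card_congr (QuotientGroup.quotientKerEquivRange φ).toEquiv
    have hd3 : Nat.card φ.range ∣ Nat.card (↥B ⧸ R) := Subgroup.card_subgroup_dvd_card _
    exact ⟨m₀, hm₀.dvd' (hd1.trans (hd2 ▸ hd3))⟩

lemma chain_mono {n : ℕ} {C : Fin (n + 1) → Subgroup G}
    (hstep : ∀ k : Fin n, C k.castSucc ≤ C k.succ) :
    ∀ k l : Fin (n + 1), k ≤ l → C k ≤ C l := by
  intro k l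
  induction l using Fin.induction with
  | zero =>
      intro h
      have hk : k = 0 := le_antisymm h (Fin.zero_le k)
      rw [hk]
  | succ j ih =>
      intro hkl
      rcases lt_or_eq_of_le hkl with hlt | heq
      · exact (ih (Fin.le_castSucc_iff.mpr hlt)).trans (hstep j)
      · rw [heq]

variable [Finite G]

lemma absorb {i : ι} {A B K : Subgroup G} (hAB : A ≤ B)
    (hnorm : ∀ x ∈ B, ∀ a ∈ A, x * a * x⁻¹ ∈ A)
    (hrel : ∀ p : ℕ, p.Prime → p ∣ A.relIndex B → p ∉ σ i)
    (hK : K ≤ B) (hKcard : IsSigmaNumber σ i (Nat.card K)) : K ≤ A := by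
  haveI hN : (A.subgroupOf B).Normal := by
    constructor
    intro a ha g
    rw [Subgroup.mem_subgroupOf] at ha ⊢
    simpa using hnorm (g : G) g.2 (a : G) ha
  set f := QuotientGroup.mk' (A.subgroupOf B) with hf
  have hd1 : Nat.card (Subgroup.map f (K.subgroupOf B)) ∣ Nat.card K := by
    refine (card_map_dvd f _).trans ?_
    rw [card_subgroupOf hK]
  have hd2 : Nat.card (Subgroup.map f (K.subgroupOf B)) ∣ A.relIndex B := by
    have h := Subgroup.card_subgroup_dvd_card (Subgroup.map f (K.subgroupOf B))
    rwa [← Subgroup.index_eq_card] at h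
  have h1 : Nat.card (Subgroup.map f (K.subgroupOf B)) = 1 := by
    apply nat_eq_one_of_no_prime
    intro p hp hpd
    exact hrel p hp (hpd.trans hd2) (hKcard p hp (hpd.trans hd1))
  have hbot : Subgroup.map f (K.subgroupOf B) = ⊥ := Subgroup.card_eq_one.mp h1
  intro x hx
  have hxB : (⟨x, hK hx⟩ : ↥B) ∈ K.subgroupOf B := Subgroup.mem_subgroupOf.mpr hx
  have : f ⟨x, hK hx⟩ ∈ Subgroup.map f (K.subgroupOf B) := Subgroup.mem_map.mpr ⟨_, hxB, rfl⟩
  rw [hbot, Subgroup.mem_bot] at this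
  have hker : (⟨x, hK hx⟩ : ↥B) ∈ f.ker := this
  rw [hf, QuotientGroup.ker_mk'] at hker
  exact hker

lemma conj_card {A : Subgroup G} (x : G) :
    Nat.card (Subgroup.map (MulAut.conj x).toMonoidHom A) = Nat.card A :=
  (Nat.card_congr (Subgroup.equivMapOfInjective A _ (MulAut.conj x).injective).toEquiv).symm

lemma chain_normalizes (hσ : IsPrimePartition σ) {i : ι} {n : ℕ}
    {C : Fin (n + 1) → Subgroup G} {A X : Subgroup G}
    (h0 : C 0 = A) (hlast : C (Fin.last n) = X)
    (hstep : ∀ k : Fin n, SigmaSubnormalStep σ (C k.castSucc) (C k.succ))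
    (hAcard : IsSigmaNumber σ i (Nat.card A))
    (hidx : ∀ p : ℕ, p.Prime → p ∣ A.relIndex X → p ∉ σ i) :
    ∀ x ∈ X, ∀ a ∈ A, x * a * x⁻¹ ∈ A := by
  have hmono := chain_mono (fun k => (hstep k).1)
  have hA_le : ∀ k, A ≤ C k := fun k => h0 ▸ hmono 0 k (Fin.zero_le k)
  have h_le_X : ∀ k, C k ≤ X := fun k => hlast ▸ hmono k (Fin.last n) (Fin.le_last k)
  have hrelk : ∀ k, ∀ p : ℕ, p.Prime → p ∣ A.relIndex (C k) → p ∉ σ i := by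
    intro k p hp hpd
    apply hidx p hp
    exact hpd.trans ⟨(C k).relIndex X,
      (Subgroup.relIndex_mul_relIndex A (C k) X (hA_le k) (h_le_X k)).symm⟩
  have key : ∀ k : Fin (n + 1), ∀ x ∈ C k, ∀ a ∈ A, x * a * x⁻¹ ∈ A := by
    intro k
    induction k using Fin.induction with
    | zero =>
        rw [h0]
        intro x hx a ha
        exact A.mul_mem (A.mul_mem hx ha) (A.inv_mem hx)
    | succ j ih =>
        obtain ⟨hBB', hcase⟩ := hstep j
        rcases hcase with hN | ⟨m₀, hm₀⟩
        · intro x hx a ha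
          have hconjB : ∀ b ∈ C j.castSucc, x * b * x⁻¹ ∈ C j.castSucc := by
            intro b hb
            have h1 := hN.conj_mem ⟨b, hBB' hb⟩ (Subgroup.mem_subgroupOf.mpr hb) ⟨x, hx⟩
            rw [Subgroup.mem_subgroupOf] at h1
            exact h1
          have hKle : Subgroup.map (MulAut.conj x).toMonoidHom A ≤ C j.castSucc := by
            rintro y ⟨a', ha', rfl⟩
            simpa using hconjB a' (hA_le j.castSucc ha')
          have hKA : Subgroup.map (MulAut.conj x).toMonoidHom A ≤ A := by
            refine absorb (hA_le j.castSucc) (ih) (hrelk j.castSucc) hKle ?_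
            rw [conj_card]
            exact hAcard
          have : (MulAut.conj x) a ∈ Subgroup.map (MulAut.conj x).toMonoidHom A :=
            Subgroup.mem_map.mpr ⟨a, ha, rfl⟩
          simpa using hKA this
        · by_cases him : m₀ = i
          · subst him
            have hBeq : C j.succ ≤ C j.castSucc := by
              apply Subgroup.subgroupOf_eq_top.mp
              apply Subgroup.index_eq_one.mp
              apply nat_eq_one_of_no_prime
              intro p hp hpd
              have hp1 : p ∣ ((C j.castSucc).subgroupOf (C j.succ)).normalCore.index :=
                hpd.trans (Subgroup.index_dvd_of_le (Subgroup.normalCore_le _))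
              rw [Subgroup.index_eq_card] at hp1
              have hpin : p ∈ σ m₀ := hm₀ p hp hp1
              have hpd2 : p ∣ A.relIndex (C j.succ) := by
                refine hpd.trans ?_
                rw [← Subgroup.relIndex_mul_relIndex A (C j.castSucc) (C j.succ)
                  (hA_le j.castSucc) hBB']
                exact dvd_mul_left _ _
              exact (hrelk j.succ p hp hpd2) hpin
            intro x hx a ha
            exact ih x (hBeq hx) a ha
          · -- m₀ ≠ i : A is inside the normal core, which is normal in C j.succ
            set R := ((C j.castSucc).subgroupOf (C j.succ)).normalCore with hRdef
            have hAB' : A ≤ C j.succ := hA_le j.succ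
            have hAR : A.subgroupOf (C j.succ) ≤ R := by
              set f := QuotientGroup.mk' R with hf
              have hd1 : Nat.card (Subgroup.map f (A.subgroupOf (C j.succ))) ∣ Nat.card A := by
                refine (card_map_dvd f _).trans ?_
                rw [card_subgroupOf hAB']
              have hd2 : Nat.card (Subgroup.map f (A.subgroupOf (C j.succ))) ∣
                  Nat.card (↥(C j.succ) ⧸ R) := Subgroup.card_subgroup_dvd_card _
              have h1 : Nat.card (Subgroup.map f (A.subgroupOf (C j.succ))) = 1 := by
                apply nat_eq_one_of_no_prime
                intro p hp hpd
                have hpi : p ∈ σ i := hAcard p hp (hpd.trans hd1)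
                have hpm : p ∈ σ m₀ := hm₀ p hp (hpd.trans hd2)
                exact him (hσ.block_eq hp hpm hpi)
              have hbot : Subgroup.map f (A.subgroupOf (C j.succ)) = ⊥ :=
                Subgroup.card_eq_one.mp h1
              intro x hx
              have : f x ∈ Subgroup.map f (A.subgroupOf (C j.succ)) :=
                Subgroup.mem_map.mpr ⟨x, hx, rfl⟩
              rw [hbot, Subgroup.mem_bot] at this
              have hker : x ∈ f.ker := this
              rwa [hf, QuotientGroup.ker_mk'] at hker
            set R₀ := Subgroup.map (C j.succ).subtype R with hR₀
            have hR₀B : R₀ ≤ C j.castSucc := by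
              rintro y ⟨z, hz, rfl⟩
              have h1 := Subgroup.normalCore_le ((C j.castSucc).subgroupOf (C j.succ)) hz
              exact Subgroup.mem_subgroupOf.mp h1
            have hAR₀ : A ≤ R₀ := by
              intro a ha
              exact ⟨⟨a, hAB' ha⟩, hAR (Subgroup.mem_subgroupOf.mpr ha), rfl⟩
            have hconjR₀ : ∀ x ∈ C j.succ, ∀ r ∈ R₀, x * r * x⁻¹ ∈ R₀ := by
              rintro x hx r ⟨z, hz, rfl⟩
              haveI : R.Normal := Subgroup.normalCore_normal _
              have h1 := this.conj_mem z hz ⟨x, hx⟩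
              exact ⟨_, h1, rfl⟩
            intro x hx a ha
            have hKle : Subgroup.map (MulAut.conj x).toMonoidHom A ≤ C j.castSucc := by
              rintro y ⟨a', ha', rfl⟩
              refine hR₀B ?_
              simpa using hconjR₀ x hx a' (hAR₀ ha')
            have hKA : Subgroup.map (MulAut.conj x).toMonoidHom A ≤ A := by
              refine absorb (hA_le j.castSucc) ih (hrelk j.castSucc) hKle ?_
              rw [conj_card]
              exact hAcard
            have : (MulAut.conj x) a ∈ Subgroup.map (MulAut.conj x).toMonoidHom A :=
              Subgroup.mem_map.mpr ⟨a, ha, rfl⟩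
            simpa using hKA this
  intro x hx
  exact key (Fin.last n) x (hlast.symm ▸ hx)
end Chains

section Full
variable {ι : Type*} {σ : ι → Set ℕ}

lemma exists_minimal_normal (G : Type*) [Group G] [Finite G] (hG : Nat.card G ≠ 1) :
    ∃ N : Subgroup G, N.Normal ∧ N ≠ ⊥ ∧
      ∀ N' : Subgroup G, N'.Normal → N' ≠ ⊥ → N' ≤ N → N' = N := by
  have htb : (⊤ : Subgroup G) ≠ ⊥ := by
    intro h
    apply hG
    rw [← Subgroup.card_top (G := G), h, Subgroup.card_bot]
  obtain ⟨N, hN, hmin⟩ := Set.exists_min_image {N : Subgroup G | N.Normal ∧ N ≠ ⊥}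
    (fun N => Nat.card N) (Set.toFinite _) ⟨⊤, ⟨inferInstance, htb⟩⟩
  refine ⟨N, hN.1, hN.2, ?_⟩
  intro N' h1 h2 h3
  have hcard := hmin N' ⟨h1, h2⟩
  have hset : (N' : Set G) = (N : Set G) := by
    apply Set.eq_of_subset_of_ncard_le h3
    rw [← Nat.card_coe_set_eq, ← Nat.card_coe_set_eq]
    exact hcard
  exact SetLike.coe_injective hset

lemma chief_bot {G : Type*} [Group G] {N : Subgroup G} (h1 : N.Normal) (h2 : N ≠ ⊥)
    (hmin : ∀ N' : Subgroup G, N'.Normal → N' ≠ ⊥ → N' ≤ N → N' = N) : IsChiefFactor G ⊥ N := by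
  refine ⟨inferInstance, h1, bot_lt_iff_ne_bot.mpr h2, ?_⟩
  intro N' hn hb hN'
  by_cases hb' : N' = ⊥
  · exact Or.inl hb'
  · exact Or.inr (hmin N' hn hb' hN')

lemma minimal_normal_primary {G : Type*} [Group G] [Finite G] (hsol : IsSigmaSoluble σ G)
    {N : Subgroup G} (h1 : N.Normal) (h2 : N ≠ ⊥)
    (hmin : ∀ N' : Subgroup G, N'.Normal → N' ≠ ⊥ → N' ≤ N → N' = N) :
    IsSigmaPrimary σ ↥N := by
  have hc := chief_bot h1 h2 hmin
  have hp := hsol ⊥ N hc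
  have hcard : Nat.card (↥N ⧸ (⊥ : Subgroup G).subgroupOf N) = Nat.card N := by
    rw [Subgroup.bot_subgroupOf]
    exact Nat.card_congr (QuotientGroup.quotientBot (G := ↥N)).toEquiv
  obtain ⟨m, hm⟩ := hp
  refine ⟨m, ?_⟩
  have : IsSigmaNumber σ m (Nat.card (↥N ⧸ (⊥ : Subgroup G).subgroupOf N)) := hm
  rwa [hcard] at this

lemma sigma_full (hσ : IsPrimePartition σ) :
    ∀ (n : ℕ) (G : Type u) [Group G] [Finite G], Nat.card G ≤ n → IsSigmaSoluble σ G →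
      ∀ j, ∃ H : Subgroup G, IsHallSigmaI σ j H := by
  intro n
  induction n with
  | zero =>
      intro G _ _ hle _ _
      have := Nat.card_pos (α := G)
      omega
  | succ n IH =>
      intro G _ _ hle hsol j
      by_cases hG1 : Nat.card G = 1
      · refine ⟨⊥, ?_, ?_⟩
        · rw [Subgroup.card_bot]
          intro p hp hpd
          exact absurd (Nat.eq_one_of_dvd_one hpd) hp.ne_one
        · intro p hp hpd
          rw [Subgroup.index_bot, hG1] at hpd
          exact absurd (Nat.eq_one_of_dvd_one hpd) hp.ne_one
      · obtain ⟨N, hNn, hNb, hNmin⟩ := exists_minimal_normal G hG1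
        haveI := hNn
        obtain ⟨m, hm⟩ := minimal_normal_primary hsol hNn hNb hNmin
        have hNc : 1 < Nat.card N := (Subgroup.one_lt_card_iff_ne_bot N).mpr hNb
        have hq : Nat.card (G ⧸ N) ≤ n := by
          have hGeq := Subgroup.card_eq_card_quotient_mul_card_subgroup N
          have hq0 : 0 < Nat.card (G ⧸ N) := Nat.card_pos
          have h2 : Nat.card (G ⧸ N) * 2 ≤ Nat.card (G ⧸ N) * Nat.card N :=
            Nat.mul_le_mul_left _ hNc
          rw [← hGeq] at h2
          omega
        obtain ⟨Hb, hHb⟩ := IH (G ⧸ N) hq (quotient_sigmaSoluble hsol N) j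
        set f := QuotientGroup.mk' N with hfdef
        have hfs : Function.Surjective f := QuotientGroup.mk'_surjective N
        set K := Subgroup.comap f Hb with hKdef
        have hKidx : K.index = Hb.index := by
          rw [hKdef, Subgroup.index_comap, MonoidHom.range_eq_top_of_surjective f hfs,
            Subgroup.relIndex_top_right]
        have hNK : N ≤ K := by
          intro x hx
          rw [hKdef, Subgroup.mem_comap]
          have : f x = 1 := by
            rw [hfdef, QuotientGroup.mk'_apply, QuotientGroup.eq_one_iff]
            exact hx
          rw [this]
          exact Hb.one_mem
        set ψ : ↥K →* G ⧸ N := f.comp K.subtype with hψdef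
        have hkerψ : ψ.ker = N.subgroupOf K := by
          ext x
          simp [hψdef, hfdef, MonoidHom.mem_ker, Subgroup.mem_subgroupOf,
            QuotientGroup.eq_one_iff]
        have hrange : ψ.range = Hb := by
          rw [hψdef, MonoidHom.range_comp, Subgroup.range_subtype, hKdef,
            Subgroup.map_comap_eq_self_of_surjective hfs]
        have hcardK : Nat.card K = Nat.card Hb * Nat.card N := by
          have h1 := Subgroup.card_eq_card_quotient_mul_card_subgroup ψ.ker
          have h2 : Nat.card (↥K ⧸ ψ.ker) = Nat.card Hb := by
            rw [← hrange]
            exact Nat.card_congr (QuotientGroup.quotientKerEquivRange ψ).toEquiv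
          have h3 : Nat.card ψ.ker = Nat.card N := by
            rw [hkerψ]
            exact card_subgroupOf hNK
          rw [h1, h2, h3]
        by_cases hc1 : IsSigmaNumber σ j (Nat.card N)
        · refine ⟨K, ?_, ?_⟩
          · rw [hcardK]
            intro p hp hpd
            rcases (Nat.Prime.dvd_mul hp).mp hpd with h | h
            · exact hHb.1 p hp h
            · exact hc1 p hp h
          · intro p hp hpd
            rw [hKidx] at hpd
            exact hHb.2 p hp hpd
        · -- Schur-Zassenhaus case
          have hpj : ∀ p : ℕ, p.Prime → p ∣ Nat.card N → p ∉ σ j := by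
            intro p hp hpd hpjj
            have hpm : p ∈ σ m := hm p hp hpd
            have : m = j := hσ.block_eq hp hpm hpjj
            exact hc1 (this ▸ hm)
          haveI hN' : (N.subgroupOf K).Normal := Subgroup.normal_subgroupOf
          have hcardN' : Nat.card (N.subgroupOf K) = Nat.card N := card_subgroupOf hNK
          have hidxN' : (N.subgroupOf K).index = Nat.card Hb := by
            have h1 := Subgroup.card_mul_index (N.subgroupOf K)
            rw [hcardN', hcardK] at h1
            -- card N * index = card Hb * card N
            have hNpos : 0 < Nat.card N := by positivity
            exact Nat.eq_of_mul_eq_mul_left hNpos (by linarith [h1] )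
          have hcop : (Nat.card (N.subgroupOf K)).Coprime ((N.subgroupOf K).index) := by
            rw [hcardN', hidxN']
            by_contra hnc
            obtain ⟨p, hp, hp1, hp2⟩ := Nat.Prime.not_coprime_iff_dvd.mp hnc
            exact hpj p hp hp1 (hHb.1 p hp hp2)
          obtain ⟨H', hH'⟩ := Subgroup.exists_right_complement'_of_coprime hcop
          have hcardH' : Nat.card H' = Nat.card Hb := by
            have h1 := hH'.card_mul
            rw [hcardN', hcardK] at h1
            have hNpos : 0 < Nat.card N := by positivity
            -- card N * card H' = card Hb * card N
            apply Nat.eq_of_mul_eq_mul_left hNpos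
            rw [h1]
            ring
          refine ⟨Subgroup.map K.subtype H', ?_, ?_⟩
          · have : Nat.card (Subgroup.map K.subtype H') = Nat.card Hb := by
              rw [← hcardH']
              exact (Nat.card_congr
                (Subgroup.equivMapOfInjective H' K.subtype (Subgroup.subtype_injective K)).toEquiv).symm
            rw [this]
            exact hHb.1
          · intro p hp hpd
            have hHpos : 0 < Nat.card (Subgroup.map K.subtype H') := Nat.card_pos
            have hcardmap : Nat.card (Subgroup.map K.subtype H') = Nat.card Hb := by
              rw [← hcardH']
              exact (Nat.card_congr
                (Subgroup.equivMapOfInjective H' K.subtype (Subgroup.subtype_injective K)).toEquiv).symm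
            have h1 := Subgroup.card_mul_index (Subgroup.map K.subtype H')
            have h2 := Subgroup.card_mul_index K
            rw [hcardmap] at h1
            rw [hcardK] at h2
            -- card Hb * idx = card G = card Hb * card N * K.index
            have hHbpos : 0 < Nat.card Hb := Nat.card_pos
            have hidx : (Subgroup.map K.subtype H').index = Nat.card N * K.index := by
              apply Nat.eq_of_mul_eq_mul_left hHbpos
              rw [h1, ← h2]
              ring
            rw [hidx] at hpd
            rcases (Nat.Prime.dvd_mul hp).mp hpd with h | h
            · exact hpj p hp h
            · rw [hKidx] at h
              exact hHb.2 p hp h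
  
end Full

section Assembly

variable {ι : Type*} {σ : ι → Set ℕ} {G : Type*} [Group G]

lemma permutes_coe_sup {A H : Subgroup G} (h : Permutes A H) :
    ((A ⊔ H : Subgroup G) : Set G) = (A : Set G) * (H : Set G) := by
  have hex : ∃ S : Subgroup G, (S : Set G) = (A : Set G) * (H : Set G) := by
    refine ⟨{ carrier := (A : Set G) * (H : Set G),
              one_mem' := ⟨1, A.one_mem, 1, H.one_mem, one_mul 1⟩,
              mul_mem' := ?_, inv_mem' := ?_ }, rfl⟩
    · rintro x y ⟨a1, ha1, h1, hh1, rfl⟩ ⟨a2, ha2, h2, hh2, rfl⟩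
      have hmid : h1 * a2 ∈ (A : Set G) * (H : Set G) := by
        rw [h]
        exact ⟨h1, hh1, a2, ha2, rfl⟩
      obtain ⟨a3, ha3, h3, hh3, he⟩ := hmid
      have he' : a3 * h3 = h1 * a2 := he
      have heq : a1 * a3 * (h3 * h2) = a1 * h1 * (a2 * h2) := by
        rw [show a1 * a3 * (h3 * h2) = a1 * (a3 * h3) * h2 by group, he']
        group
      exact ⟨a1 * a3, A.mul_mem ha1 ha3, h3 * h2, H.mul_mem hh3 hh2, heq⟩
    · rintro x ⟨a, ha, b, hb, rfl⟩
      show (a * b)⁻¹ ∈ (A : Set G) * (H : Set G)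
      rw [h]
      exact ⟨b⁻¹, H.inv_mem hb, a⁻¹, A.inv_mem ha, (mul_inv_rev a b).symm⟩
  obtain ⟨S, hS⟩ := hex
  have h1 : A ⊔ H = S := by
    apply le_antisymm
    · apply sup_le
      · intro a ha
        rw [← SetLike.mem_coe, hS]
        exact ⟨a, ha, 1, H.one_mem, mul_one a⟩
      · intro x hx
        rw [← SetLike.mem_coe, hS]
        exact ⟨1, A.one_mem, x, hx, one_mul x⟩
    · intro x hx
      rw [← SetLike.mem_coe, hS] at hx
      obtain ⟨a, ha, b, hb, rfl⟩ := hx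
      exact (A ⊔ H).mul_mem ((le_sup_left : A ≤ A ⊔ H) ha) ((le_sup_right : H ≤ A ⊔ H) hb)
  rw [h1, hS]

variable [Finite G]

lemma card_sup_of_permutes {A H : Subgroup G} (h : Permutes A H) (hd : A ⊓ H = ⊥) :
    Nat.card (A ⊔ H : Subgroup G) = Nat.card A * Nat.card H := by
  have e1 : Nat.card (A ⊔ H : Subgroup G) =
      Nat.card ((A : Set G) * (H : Set G) : Set G) :=
    Nat.card_congr (Equiv.setCongr (permutes_coe_sup h))
  have hbij : Function.Bijective (fun p : ↥A × ↥H =>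
      (⟨(p.1 : G) * (p.2 : G), Set.mul_mem_mul p.1.2 p.2.2⟩ :
        ((A : Set G) * (H : Set G) : Set G))) := by
    constructor
    · rintro ⟨a1, h1⟩ ⟨a2, h2⟩ heq
      have he : (a1 : G) * (h1 : G) = (a2 : G) * (h2 : G) := congrArg Subtype.val heq
      have e2 : (a2 : G)⁻¹ * (a1 : G) = (h2 : G) * (h1 : G)⁻¹ := by
        rw [inv_mul_eq_iff_eq_mul, ← mul_assoc]
        exact eq_mul_inv_iff_mul_eq.mpr he
      have hmem : (a2 : G)⁻¹ * (a1 : G) ∈ A ⊓ H := by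
        refine ⟨A.mul_mem (A.inv_mem a2.2) a1.2, ?_⟩
        rw [e2]
        exact H.mul_mem h2.2 (H.inv_mem h1.2)
      rw [hd, Subgroup.mem_bot] at hmem
      have ha : (a2 : G) = (a1 : G) := inv_mul_eq_one.mp hmem
      have hh : (h2 : G) = (h1 : G) := by
        rw [hmem] at e2
        exact (mul_inv_eq_one.mp e2.symm)
      simp only [Prod.mk.injEq]
      exact ⟨Subtype.ext ha.symm, Subtype.ext hh.symm⟩
    · rintro ⟨x, hx⟩
      obtain ⟨a, ha, b, hb, he⟩ := hx
      exact ⟨(⟨a, ha⟩, ⟨b, hb⟩), Subtype.ext he⟩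
  rw [e1, ← Nat.card_eq_of_bijective _ hbij, Nat.card_prod]

lemma relindex_sup_of_permutes {A H : Subgroup G} (h : Permutes A H) (hd : A ⊓ H = ⊥) :
    A.relIndex (A ⊔ H) = Nat.card H := by
  have h1 := Subgroup.card_mul_index (A.subgroupOf (A ⊔ H))
  rw [card_subgroupOf (le_sup_left : A ≤ A ⊔ H)] at h1
  rw [card_sup_of_permutes h hd] at h1
  have hApos : 0 < Nat.card A := Nat.card_pos
  exact Nat.eq_of_mul_eq_mul_left hApos h1

lemma hall_conj {j : ι} {H : Subgroup G} (hH : IsHallSigmaI σ j H) (c : G) :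
    IsHallSigmaI σ j (Subgroup.map (MulAut.conj c).toMonoidHom H) := by
  have hcard : Nat.card (Subgroup.map (MulAut.conj c).toMonoidHom H) = Nat.card H :=
    conj_card c
  constructor
  · rw [hcard]
    exact hH.1
  · have hidx : (Subgroup.map (MulAut.conj c).toMonoidHom H).index = H.index := by
      have h1 := Subgroup.card_mul_index (Subgroup.map (MulAut.conj c).toMonoidHom H)
      have h2 := Subgroup.card_mul_index H
      rw [hcard] at h1
      have hpos : 0 < Nat.card H := Nat.card_pos
      exact Nat.eq_of_mul_eq_mul_left hpos (h1.trans h2.symm)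
    rw [hidx]
    exact hH.2

lemma hall_normalizes (hσ : IsPrimePartition σ) {i j : ι} (hij : j ≠ i) {A H : Subgroup G}
    (hAcard : IsSigmaNumber σ i (Nat.card A)) (hsub : IsSigmaSubnormal σ A)
    (hperm : Permutes A H) (hH : IsHallSigmaI σ j H) :
    H ≤ Subgroup.normalizer (A : Set G) := by
  have hd : A ⊓ H = ⊥ := by
    apply Subgroup.card_eq_one.mp
    apply nat_eq_one_of_no_prime
    intro p hp hpd
    have hpi : p ∈ σ i := hAcard p hp (hpd.trans (Subgroup.card_dvd_of_le inf_le_left))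
    have hpj : p ∈ σ j := hH.1 p hp (hpd.trans (Subgroup.card_dvd_of_le inf_le_right))
    exact hij (hσ.block_eq hp hpj hpi)
  have hrel : A.relIndex (A ⊔ H) = Nat.card H := relindex_sup_of_permutes hperm hd
  have hidx : ∀ p : ℕ, p.Prime → p ∣ A.relIndex (A ⊔ H) → p ∉ σ i := by
    intro p hp hpd hpi
    exact hij (hσ.block_eq hp (hH.1 p hp (hrel ▸ hpd)) hpi)
  obtain ⟨n, C, h0, hlast, hstep⟩ := hsub
  have hAX : A ≤ A ⊔ H := le_sup_left
  have h0' : (fun k => C k ⊓ (A ⊔ H)) 0 = A := by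
    simp only [h0]
    exact inf_eq_left.mpr hAX
  have hlast' : (fun k => C k ⊓ (A ⊔ H)) (Fin.last n) = A ⊔ H := by
    simp only [hlast]
    exact top_inf_eq _
  have hstep' : ∀ k : Fin n, SigmaSubnormalStep σ ((fun k => C k ⊓ (A ⊔ H)) k.castSucc)
      ((fun k => C k ⊓ (A ⊔ H)) k.succ) := fun k => step_inter (hstep k)
  have hnorm := chain_normalizes (C := fun k => C k ⊓ (A ⊔ H)) hσ h0' hlast' hstep' hAcard hidx
  intro x hx
  have hxX : x ∈ A ⊔ H := (le_sup_right : H ≤ A ⊔ H) hx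
  rw [Subgroup.mem_normalizer_iff]
  intro b
  constructor
  · intro hb
    exact hnorm x hxX b hb
  · intro hb
    have h2 := hnorm x⁻¹ ((A ⊔ H).inv_mem hxX) _ hb
    have he : x⁻¹ * (x * b * x⁻¹) * x⁻¹⁻¹ = b := by group
    rwa [he] at h2

end Assembly
/-- If `G = D ⋊ M` is a σ-soluble PσT-group with `D = G^{𝔑_σ}` and `A` is a
σ-primary σ-subnormal subgroup of `G` with `A ≤ M`, then `D ≤ C_G(A)`. -/
theorem statement_12 {ι : Type*} (σ : ι → Set ℕ) (hσ : IsPrimePartition σ)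
    {G : Type*} [Group G] [Finite G]
    (hsol : IsSigmaSoluble σ G) (hPT : IsPSigmaTGroup σ G)
    (D M : Subgroup G) (hD : D = sigmaNilpotentResidual σ G)
    (hDn : D.Normal) (hcompl : D.IsComplement' M)
    (A : Subgroup G) (hA1 : IsSigmaPrimary σ ↥A) (hA2 : IsSigmaSubnormal σ A)
    (hAM : A ≤ M) :
    D ≤ Subgroup.centralizer (A : Set G) := by
  classical
  obtain ⟨i, hAcard⟩ := hA1
  have hperm : IsSigmaPermutable σ A := isSigmaSubnormal_isSigmaPermutable hσ hPT hA2
  set 𝒰 : Set G :=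
    ⋃ (H : Subgroup G), ⋃ (_ : ∃ j, j ≠ i ∧ IsHallSigmaI σ j H), (H : Set G) with h𝒰
  set Y : Subgroup G := Subgroup.normalClosure 𝒰 with hYdef
  haveI hYn : Y.Normal := hYdef ▸ Subgroup.normalClosure_normal
  -- every relevant Hall subgroup normalizes A
  have hYN : Y ≤ Subgroup.normalizer (A : Set G) := by
    rw [hYdef]
    refine (Subgroup.closure_le _).mpr ?_
    intro x hx
    obtain ⟨a, ha𝒰, hconj⟩ := Group.mem_conjugatesOfSet_iff.mp hx
    obtain ⟨c, rfl⟩ := isConj_iff.mp hconj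
    obtain ⟨H, hHex, haH⟩ := Set.mem_iUnion₂.mp ha𝒰
    obtain ⟨j, hji, hH⟩ := hHex
    have hconjHall := hall_conj hH c
    have hle := hall_normalizes hσ hji hAcard hA2
      (hperm j _ hconjHall) hconjHall
    have hmem : c * a * c⁻¹ ∈ Subgroup.map (MulAut.conj c).toMonoidHom H :=
      Subgroup.mem_map.mpr ⟨a, haH, by simp⟩
    exact hle hmem
  -- every relevant Hall subgroup is inside Y
  have hHallY : ∀ j, j ≠ i → ∀ H : Subgroup G, IsHallSigmaI σ j H → H ≤ Y := by
    intro j hj H hH x hx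
    rw [hYdef]
    apply Subgroup.subset_normalClosure
    exact Set.mem_iUnion₂.mpr ⟨H, ⟨j, hj, hH⟩, hx⟩
  -- the quotient G / Y is a σ i-group
  have hYidx : ∀ p : ℕ, p.Prime → p ∣ Y.index → p ∈ σ i := by
    intro p hp hpd
    obtain ⟨j, hj, -⟩ := hσ.existsUnique_mem p hp
    by_cases hji : j = i
    · exact hji ▸ hj
    · obtain ⟨H, hH⟩ := sigma_full hσ (Nat.card G) G le_rfl hsol j
      have hle := hHallY j hji H hH
      have hdvd : p ∣ H.index := hpd.trans (Subgroup.index_dvd_of_le hle)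
      exact absurd hj (hH.2 p hp hdvd)
  -- hence G / Y is σ-nilpotent
  have hnil : IsSigmaNilpotent σ (G ⧸ Y) := by
    refine ⟨fun j => if j = i then ⊤ else ⊥, ?_, ?_, ?_, ?_⟩
    · intro j
      show (if j = i then (⊤ : Subgroup (G ⧸ Y)) else ⊥).Normal
      by_cases h : j = i
      · rw [if_pos h]; infer_instance
      · rw [if_neg h]; infer_instance
    · intro j
      show IsSigmaIGroup σ j ↥(if j = i then (⊤ : Subgroup (G ⧸ Y)) else ⊥)
      by_cases h : j = i
      · rw [if_pos h]
        intro p hp hpd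
        rw [Subgroup.card_top] at hpd
        have : p ∣ Y.index := by
          rw [Subgroup.index_eq_card]
          exact hpd
        rw [h]
        exact hYidx p hp this
      · rw [if_neg h]
        intro p hp hpd
        rw [Subgroup.card_bot] at hpd
        exact absurd (Nat.eq_one_of_dvd_one hpd) hp.ne_one
    · intro j
      show Disjoint (if j = i then (⊤ : Subgroup (G ⧸ Y)) else ⊥)
        (⨆ (k : ι), ⨆ (_ : k ≠ j), if k = i then (⊤ : Subgroup (G ⧸ Y)) else ⊥)
      by_cases h : j = i
      · have hsup : (⨆ (k : ι), ⨆ (_ : k ≠ j),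
            (if k = i then (⊤ : Subgroup (G ⧸ Y)) else ⊥)) = ⊥ := by
          apply le_bot_iff.mp
          apply iSup_le
          intro k
          apply iSup_le
          intro hk
          rw [if_neg (h ▸ hk)]
        rw [hsup]
        exact disjoint_bot_right
      · have h1 : (if j = i then (⊤ : Subgroup (G ⧸ Y)) else ⊥) = ⊥ := if_neg h
        rw [h1]
        exact disjoint_bot_left
    · apply eq_top_iff.mpr
      refine le_trans ?_ (le_iSup (fun j => if j = i then (⊤ : Subgroup (G ⧸ Y)) else ⊥) i)
      show (⊤ : Subgroup (G ⧸ Y)) ≤ if i = i then ⊤ else ⊥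
      rw [if_pos rfl]
  -- D ≤ Y
  have hDY : D ≤ Y := by
    rw [hD]
    exact sInf_le ⟨hYn, hnil⟩
  -- conclude
  intro d hd
  rw [Subgroup.mem_centralizer_iff]
  intro a ha
  have hdN : d ∈ Subgroup.normalizer (A : Set G) := hYN (hDY hd)
  have hdN' : d⁻¹ ∈ Subgroup.normalizer (A : Set G) := (Subgroup.normalizer (A : Set G)).inv_mem hdN
  have hcA : d⁻¹ * a⁻¹ * d ∈ A := by
    have h1 := (Subgroup.mem_normalizer_iff.mp hdN' a⁻¹).mp (A.inv_mem ha)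
    rwa [inv_inv] at h1
  have hcA2 : d⁻¹ * a⁻¹ * d * a ∈ A := A.mul_mem hcA ha
  have hcD : d⁻¹ * a⁻¹ * d * a ∈ D := by
    have h1 : a⁻¹ * d * a ∈ D := by
      have h2 := hDn.conj_mem d hd a⁻¹
      rwa [inv_inv] at h2
    have h3 := D.mul_mem (D.inv_mem hd) h1
    rwa [show d⁻¹ * (a⁻¹ * d * a) = d⁻¹ * a⁻¹ * d * a by group] at h3
  have hbot : d⁻¹ * a⁻¹ * d * a ∈ (⊥ : Subgroup G) := by
    have h1 : d⁻¹ * a⁻¹ * d * a ∈ D ⊓ M := ⟨hcD, hAM hcA2⟩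
    rwa [hcompl.disjoint.eq_bot] at h1
  have hone : d⁻¹ * a⁻¹ * d * a = 1 := by rwa [Subgroup.mem_bot] at hbot
  have he : (a * d)⁻¹ * (d * a) = 1 := by
    rw [show (a * d)⁻¹ * (d * a) = d⁻¹ * a⁻¹ * d * a by group]
    exact hone
  exact inv_mul_eq_one.mp he
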